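/- Let G be a finite simple graph on a vertex set V without isolated vertices, let 𝓛 be its normalized Laplacian, let ω ≥ 0, and let PW_ω(G) be the corresponding Paley–Wiener space. Suppose U ⊆ V is a uniqueness set for PW_ω(G), i.e., any two functions in PW_ω(G) agreeing at every vertex of U are equal. Then there exists a family of functions (Θ_u)_{u∈U} with each Θ_u ∈ PW_ω(G) such that every f ∈ PW_ω(G) satisfies the reconstruction formula f(v) = ∑_{u∈U} f(u)·Θ_u(v) for all v ∈ V. -/

import Mathlib

/-- The normalized Laplacian of a finite simple graph as a linear endomorphism of `V → ℂ`:
`(𝓛 f) v = f v − ∑_{u ∼ v} f u / √(d u · d v)`. -/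
noncomputable def nLapL {V : Type*} [Fintype V] (G : SimpleGraph V) [DecidableRel G.Adj] :
    (V → ℂ) →ₗ[ℂ] (V → ℂ) where
  toFun f := fun v =>
    f v - ∑ u ∈ G.neighborFinset v, f u / (Real.sqrt ((G.degree u : ℝ) * (G.degree v : ℝ)) : ℂ)
  map_add' f g := by
    funext v
    simp only [Pi.add_apply, add_div, Finset.sum_add_distrib]
    ring
  map_smul' a f := by
    funext v
    simp only [Pi.smul_apply, smul_eq_mul, RingHom.id_apply, mul_sub, Finset.mul_sum,
      mul_div_assoc]

/-- The Paley–Wiener space `PW_ω(G)`: the span (supremum) of the eigenspaces of the normalized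
Laplacian corresponding to (real) eigenvalues `μ ≤ ω`. -/
noncomputable def PW {V : Type*} [Fintype V] (G : SimpleGraph V) [DecidableRel G.Adj] (ω : ℝ) :
    Submodule ℂ (V → ℂ) :=
  ⨆ μ : ℝ, ⨆ _ : μ ≤ ω, Module.End.eigenspace (nLapL G) (μ : ℂ)

/-- If `U` is a uniqueness set for `PW_ω(G)` on a finite graph, then there is a
frame `(Θ_u)_{u ∈ U}` of functions in `PW_ω(G)` such that every `f ∈ PW_ω(G)` satisfies
`f v = ∑_{u ∈ U} f u · Θ_u v`. -/
theorem uniqueness_set_reconstruction {V : Type*} [Fintype V] (G : SimpleGraph V)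
    [DecidableRel G.Adj] (hdeg : ∀ v : V, 0 < G.degree v) (ω : ℝ) (hω : 0 ≤ ω)
    (U : Set V)
    (hU : ∀ f ∈ PW G ω, ∀ g ∈ PW G ω, (∀ u ∈ U, f u = g u) → f = g) :
    ∃ Θ : U → (V → ℂ), (∀ u : U, Θ u ∈ PW G ω) ∧
      ∀ f ∈ PW G ω, ∀ v : V, f v = ∑' u : U, f u * Θ u v := by
  classical
  set E := PW G ω with hE
  -- evaluation functionals
  let ev : U → (E →ₗ[ℂ] ℂ) := fun u => (LinearMap.proj (u : V)).comp E.subtype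
  have hsep : (⨅ u : U, LinearMap.ker (ev u)) = ⊥ := by
    rw [eq_bot_iff]
    rintro ⟨f, hf⟩ hmem
    simp only [Submodule.mem_iInf, LinearMap.mem_ker] at hmem
    have h0 : f = (0 : V → ℂ) :=
      hU f hf 0 (Submodule.zero_mem _) fun u hu => by simpa [ev] using hmem ⟨u, hu⟩
    rw [Submodule.mem_bot]
    exact Subtype.ext h0
  -- find a finite subset whose evaluations separate points, by Artinian-ness
  let Φ : Finset U → Submodule ℂ E := fun s => s.inf fun u => LinearMap.ker (ev u)
  obtain ⟨M, ⟨s, hs⟩, hmin⟩ :=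
    (wellFounded_lt (α := Submodule ℂ E)).has_min (Set.range Φ) ⟨Φ ∅, ⟨∅, rfl⟩⟩
  have hMle : ∀ u : U, M ≤ LinearMap.ker (ev u) := by
    intro u
    have h1 : Φ (insert u s) ≤ M := by
      rw [← hs]; exact Finset.inf_mono (Finset.subset_insert u s)
    have h2 : ¬ Φ (insert u s) < M := hmin _ ⟨_, rfl⟩
    have heq : Φ (insert u s) = M := by
      by_contra hne
      exact h2 (h1.lt_of_ne hne)
    calc M = Φ (insert u s) := heq.symm
    _ ≤ LinearMap.ker (ev u) := Finset.inf_le (Finset.mem_insert_self u s)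
  have hMbot : M = ⊥ := le_bot_iff.1 (hsep ▸ le_iInf hMle)
  have hΦs : Φ s = ⊥ := hs.trans hMbot
  -- the evaluation map on the finite set is injective, get a linear left inverse
  let evs : E →ₗ[ℂ] (↥s → ℂ) := LinearMap.pi fun i : ↥s => ev i
  have hker : LinearMap.ker evs = ⊥ := by
    rw [LinearMap.ker_pi, ← hΦs]
    simp only [Φ, Finset.inf_eq_iInf]
    exact iInf_subtype
  obtain ⟨L, hL⟩ := evs.exists_leftInverse_of_injective hker
  -- define the reconstruction family
  let Θ : U → (V → ℂ) := fun u =>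
    if h : u ∈ s then ((L (Pi.single (⟨u, h⟩ : ↥s) 1)) : V → ℂ) else 0
  refine ⟨Θ, ?_, ?_⟩
  · intro u
    by_cases h : u ∈ s
    · simpa [Θ, dif_pos h] using (L (Pi.single (⟨u, h⟩ : ↥s) 1)).2
    · simpa [Θ, dif_neg h] using E.zero_mem
  · intro f hf v
    have hzero : ∀ u : U, u ∉ (s : Finset U) → f u * Θ u v = 0 := by
      intro u hu
      simp [Θ, dif_neg hu]
    rw [tsum_eq_sum hzero]
    set F : E := ⟨f, hf⟩ with hF
    have hdecomp : evs F = ∑ i : ↥s, Pi.single i (f (i : U)) := by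
      rw [Finset.univ_sum_single (f := fun i : ↥s => f (i : U))]
      rfl
    have hsingle : ∀ i : ↥s, (Pi.single i (f (i : U)) : ↥s → ℂ) = f (i : U) • (Pi.single i (1 : ℂ) : ↥s → ℂ) := by
      intro i
      ext j
      by_cases h : j = i
      · subst h; simp
      · simp [Pi.single_apply, h]
    have hFeq : F = ∑ i : ↥s, f (i : U) • L (Pi.single i (1 : ℂ)) := by
      have h1 : L (evs F) = F := LinearMap.congr_fun hL F
      calc F = L (evs F) := h1.symm
      _ = ∑ i : ↥s, f (i : U) • L (Pi.single i (1 : ℂ)) := by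
          rw [hdecomp, map_sum]
          exact Finset.sum_congr rfl fun i _ => by rw [hsingle i, map_smul]
    have hfv : f v = (F : V → ℂ) v := rfl
    rw [hfv, hFeq]
    rw [← Finset.sum_coe_sort s (fun u => f u * Θ u v)]
    simp only [AddSubmonoidClass.coe_finset_sum, Finset.sum_apply, SetLike.val_smul,
      Pi.smul_apply, smul_eq_mul]
    refine Finset.sum_congr rfl fun i _ => ?_
    have : Θ (i : U) = ((L (Pi.single i (1 : ℂ))) : V → ℂ) := by
      simp only [Θ, dif_pos i.2, Subtype.coe_eta]
    rw [this]
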